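/- In the ring R = ℤ[λ, c₁, …, c₂ₙ]/I (with I generated by the relations c_p = Σ_{i=0}^{p} (-1)^i binom(2n−i, p−i) c_i λ^{p−i}, p = 1,…,2n), the ideal generated by {2·c_p : p odd, 1 ≤ p ≤ 2n} is contained in the principal ideal λR. -/
import Mathlib


open MvPolynomial Finset

/-- The variable `λ`. -/
noncomputable def lam : MvPolynomial ℕ ℤ := X 0

/-- The Chern class variables, with `cc 0 = 1` and `cc i = X i` for `i ≥ 1`. -/
noncomputable def cc (i : ℕ) : MvPolynomial ℕ ℤ := if i = 0 then 1 else X i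

/-- The defining relation `c_p - Σ_{i=0}^{p} (-1)^i C(2n-i, p-i) c_i λ^{p-i}`. -/
noncomputable def rel (n p : ℕ) : MvPolynomial ℕ ℤ :=
  cc p - ∑ i ∈ Finset.range (p + 1),
    (-1) ^ i * (Nat.choose (2 * n - i) (p - i) : MvPolynomial ℕ ℤ) * cc i * lam ^ (p - i)

/-- The ideal `I` generated by the relations for `p = 1, …, 2n`. -/
noncomputable def GOIdeal (n : ℕ) : Ideal (MvPolynomial ℕ ℤ) :=
  Ideal.span {f | ∃ p : ℕ, 1 ≤ p ∧ p ≤ 2 * n ∧ f = rel n p}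

theorem stmt_2 (n : ℕ) :
    Ideal.span {x : MvPolynomial ℕ ℤ ⧸ GOIdeal n |
        ∃ p : ℕ, Odd p ∧ 1 ≤ p ∧ p ≤ 2 * n ∧
          x = Ideal.Quotient.mk (GOIdeal n) (2 * cc p)} ≤
      Ideal.span {Ideal.Quotient.mk (GOIdeal n) lam} := by
  rw [Ideal.span_le]
  rintro x ⟨p, hodd, h1, h2, rfl⟩
  have hrel : rel n p ∈ GOIdeal n := Ideal.subset_span ⟨p, h1, h2, rfl⟩
  have key : (2 * cc p : MvPolynomial ℕ ℤ) =
      rel n p + ∑ i ∈ Finset.range p,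
        (-1) ^ i * (Nat.choose (2 * n - i) (p - i) : MvPolynomial ℕ ℤ) * cc i *
          lam ^ (p - i) := by
    rw [rel, Finset.sum_range_succ]
    simp [Nat.sub_self, hodd.neg_one_pow]
    ring
  rw [SetLike.mem_coe, key, map_add, Ideal.Quotient.eq_zero_iff_mem.mpr hrel, zero_add,
    map_sum]
  refine Ideal.sum_mem _ fun i hi => ?_
  obtain ⟨m, hm⟩ : ∃ m, p - i = m + 1 :=
    ⟨p - i - 1, by have := Finset.mem_range.mp hi; omega⟩
  have hfac : (-1 : MvPolynomial ℕ ℤ) ^ i * (Nat.choose (2 * n - i) (p - i) : MvPolynomial ℕ ℤ)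
      * cc i * lam ^ (p - i)
      = ((-1) ^ i * (Nat.choose (2 * n - i) (p - i) : MvPolynomial ℕ ℤ) * cc i *
        lam ^ m) * lam := by
    rw [hm, pow_succ]; ring
  rw [hfac, map_mul]
  exact Ideal.mul_mem_left _ _ (Ideal.subset_span rfl)
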